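/- Let N ≥ 2. There exists a constant C, depending only on N, such that for every finite positive Radon measure μ on ℝ^N and every r > 0 one has sup_{t>0} t · Cap({x ∈ B(0,r) : ∫_{{y : 0 < |y| ≤ 2r}} |x−y|^{-(N-1)} |y|^{-1} dμ(y) > t}) ≤ C · r^{N-1} · M(μ)(0). -/

import Mathlib

open MeasureTheory Metric Filter
open scoped ENNReal Topology NNReal

/-- The capacity (in the de la Vallée Poussin sense) associated with the kernel
`|x|^{-(N-1)}`: for compact `E`, the sup of `ν E` over positive measures `ν`
supported in `E` whose potential is everywhere at most `1`; for arbitrary sets,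
the sup over compact subsets. -/
noncomputable def rieszCap (N : ℕ) (A : Set (EuclideanSpace ℝ (Fin N))) : ℝ≥0∞ :=
  ⨆ (E : Set (EuclideanSpace ℝ (Fin N))) (_ : IsCompact E) (_ : E ⊆ A)
    (ν : Measure (EuclideanSpace ℝ (Fin N))) (_ : ν Eᶜ = 0)
    (_ : ∀ x : EuclideanSpace ℝ (Fin N),
      (∫⁻ y, (‖x - y‖₊ : ℝ≥0∞) ^ (-(N - 1 : ℝ)) ∂ν) ≤ 1), ν E

/-- The Hardy–Littlewood maximal function of a (positive) measure:
`M(μ)(x) = sup_{r>0} μ(B(x,r)) / |B(x,r)|`. -/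
noncomputable def maxFn {N : ℕ} (μ : Measure (EuclideanSpace ℝ (Fin N)))
    (x : EuclideanSpace ℝ (Fin N)) : ℝ≥0∞ :=
  ⨆ (r : ℝ) (_ : 0 < r), μ (ball x r) / volume (ball x r)

lemma maxFn_ball {N : ℕ} (μ : Measure (EuclideanSpace ℝ (Fin N))) {ρ : ℝ} (hρ : 0 < ρ) :
    μ (ball 0 ρ) ≤ maxFn μ 0 * volume (ball (0 : EuclideanSpace ℝ (Fin N)) ρ) := by
  have h1 : μ (ball 0 ρ) / volume (ball (0 : EuclideanSpace ℝ (Fin N)) ρ) ≤ maxFn μ 0 :=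
    le_iSup₂ (f := fun r (_ : 0 < r) => μ (ball (0:EuclideanSpace ℝ (Fin N)) r) / volume (ball (0:EuclideanSpace ℝ (Fin N)) r)) ρ hρ
  exact (ENNReal.div_le_iff (measure_ball_pos volume 0 hρ).ne' measure_ball_lt_top.ne).mp h1

lemma dyadic_bound {N : ℕ} (hN : 2 ≤ N) (μ : Measure (EuclideanSpace ℝ (Fin N)))
    {r : ℝ} (hr : 0 < r) :
    (∫⁻ y in {y : EuclideanSpace ℝ (Fin N) | y ≠ 0 ∧ ‖y‖ ≤ 2 * r}, (‖y‖₊ : ℝ≥0∞)⁻¹ ∂μ) ≤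
      ENNReal.ofReal (4 ^ N * r ^ (N - 1)) *
        (2 * volume (ball (0 : EuclideanSpace ℝ (Fin N)) 1)) * maxFn μ 0 := by
  set V1 := volume (ball (0 : EuclideanSpace ℝ (Fin N)) 1) with hV1
  set A : ℕ → Set (EuclideanSpace ℝ (Fin N)) :=
    fun k => {y | 2 * r / 2 ^ (k + 1) < ‖y‖ ∧ ‖y‖ ≤ 2 * r / 2 ^ k} with hA
  -- covering
  have hsub : {y : EuclideanSpace ℝ (Fin N) | y ≠ 0 ∧ ‖y‖ ≤ 2 * r} ⊆ ⋃ k, A k := by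
    rintro y ⟨hy0, hy2r⟩
    have hny : 0 < ‖y‖ := norm_pos_iff.mpr hy0
    have hex : ∃ k : ℕ, 2 * r / 2 ^ (k + 1) < ‖y‖ := by
      obtain ⟨n, hn⟩ := pow_unbounded_of_one_lt (2 * r / ‖y‖) (by norm_num : (1:ℝ) < 2)
      refine ⟨n, ?_⟩
      rw [div_lt_iff₀ (by positivity)]
      calc 2 * r = (2 * r / ‖y‖) * ‖y‖ := by field_simp
        _ < 2 ^ n * ‖y‖ := by exact mul_lt_mul_of_pos_right hn hny
        _ ≤ ‖y‖ * 2 ^ (n + 1) := by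
            rw [mul_comm]
            exact mul_le_mul_of_nonneg_left (pow_le_pow_right₀ (by norm_num) (Nat.le_succ n)) hny.le
    classical
    refine Set.mem_iUnion.mpr ⟨Nat.find hex, Nat.find_spec hex, ?_⟩
    cases h0 : Nat.find hex with
    | zero => simpa using hy2r
    | succ m =>
      have hm := Nat.find_min hex (show m < Nat.find hex by omega)
      push_neg at hm
      exact hm
  have hmeasA : ∀ k, MeasurableSet (A k) := fun k =>
    ((isOpen_lt continuous_const continuous_norm).measurableSet).inter
      ((isClosed_le continuous_norm continuous_const).measurableSet)
  -- per-term bound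
  have hterm : ∀ k : ℕ, (∫⁻ y in A k, (‖y‖₊ : ℝ≥0∞)⁻¹ ∂μ) ≤
      ((2:ℝ≥0∞)⁻¹) ^ k * (ENNReal.ofReal (4 ^ N * r ^ (N - 1)) * V1 * maxFn μ 0) := by
    intro k
    have h2k : (0:ℝ) < 2 ^ k := by positivity
    have hlow : (0:ℝ) < 2 * r / 2 ^ (k + 1) := by positivity
    have step1 : (∫⁻ y in A k, (‖y‖₊ : ℝ≥0∞)⁻¹ ∂μ) ≤
        ENNReal.ofReal (2 ^ (k+1) / (2 * r)) * μ (A k) := by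
      rw [← setLIntegral_const]
      refine setLIntegral_mono' (hmeasA k) fun y hy => ?_
      have h1 : ENNReal.ofReal (2 * r / 2 ^ (k + 1)) ≤ (‖y‖₊ : ℝ≥0∞) := by
        rw [show (‖y‖₊ : ℝ≥0∞) = ENNReal.ofReal ‖y‖ from (ofReal_norm y).symm]
        exact ENNReal.ofReal_le_ofReal hy.1.le
      calc (‖y‖₊ : ℝ≥0∞)⁻¹ ≤ (ENNReal.ofReal (2 * r / 2 ^ (k + 1)))⁻¹ :=
            ENNReal.inv_le_inv' h1
        _ = ENNReal.ofReal ((2 * r / 2 ^ (k + 1))⁻¹) :=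
            (ENNReal.ofReal_inv_of_pos hlow).symm
        _ = ENNReal.ofReal (2 ^ (k+1) / (2 * r)) := by rw [inv_div]
    have step2 : μ (A k) ≤ maxFn μ 0 * (ENNReal.ofReal ((4 * r / 2 ^ k) ^ N) * V1) := by
      have hAball : A k ⊆ ball 0 (4 * r / 2 ^ k) := by
        intro y hy
        rw [mem_ball_zero_iff]
        calc ‖y‖ ≤ 2 * r / 2 ^ k := hy.2
          _ < 4 * r / 2 ^ k := by
              rw [div_lt_div_iff₀ h2k h2k]; nlinarith
      calc μ (A k) ≤ μ (ball 0 (4 * r / 2 ^ k)) := measure_mono hAball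
        _ ≤ maxFn μ 0 * volume (ball (0 : EuclideanSpace ℝ (Fin N)) (4 * r / 2 ^ k)) :=
            maxFn_ball μ (by positivity)
        _ = maxFn μ 0 * (ENNReal.ofReal ((4 * r / 2 ^ k) ^ N) * V1) := by
            rw [Measure.addHaar_ball_of_pos _ _ (by positivity : (0:ℝ) < 4 * r / 2 ^ k),
              finrank_euclideanSpace_fin]
    -- real arithmetic
    have key : (2:ℝ) ^ (k+1) / (2 * r) * (4 * r / 2 ^ k) ^ N ≤
        (2⁻¹) ^ k * (4 ^ N * r ^ (N - 1)) := by
      obtain ⟨M, rfl⟩ : ∃ M, N = M + 2 := ⟨N - 2, by omega⟩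
      have h1 : (2:ℝ) ^ (k+1) / (2 * r) * (4 * r / 2 ^ k) ^ (M+2)
          = 4 ^ (M+2) * r ^ (M+1) * (2 ^ k / 2 ^ (k * (M + 2))) := by
        rw [div_pow, mul_pow, ← pow_mul]
        field_simp
        ring
      have h2 : (2:ℝ) ^ k / 2 ^ (k * (M + 2)) ≤ (2⁻¹) ^ k := by
        rw [inv_pow, div_le_iff₀ (by positivity), ← inv_mul_le_iff₀ (by positivity), inv_inv,
          ← pow_add]
        exact pow_le_pow_right₀ (by norm_num) (by nlinarith)
      calc (2:ℝ) ^ (k+1) / (2 * r) * (4 * r / 2 ^ k) ^ (M+2)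
          = 4 ^ (M+2) * r ^ (M+1) * (2 ^ k / 2 ^ (k * (M + 2))) := h1
        _ ≤ 4 ^ (M+2) * r ^ (M+1) * (2⁻¹) ^ k := by
            exact mul_le_mul_of_nonneg_left h2 (by positivity)
        _ = (2⁻¹) ^ k * (4 ^ (M+2) * r ^ (M+2-1)) := by
            rw [show M + 2 - 1 = M + 1 from rfl]; ring
    calc (∫⁻ y in A k, (‖y‖₊ : ℝ≥0∞)⁻¹ ∂μ)
        ≤ ENNReal.ofReal (2 ^ (k+1) / (2 * r)) * μ (A k) := step1
      _ ≤ ENNReal.ofReal (2 ^ (k+1) / (2 * r)) *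
            (maxFn μ 0 * (ENNReal.ofReal ((4 * r / 2 ^ k) ^ N) * V1)) :=
          mul_le_mul_right step2 _
      _ = ENNReal.ofReal (2 ^ (k+1) / (2 * r) * (4 * r / 2 ^ k) ^ N) * V1 * maxFn μ 0 := by
          rw [ENNReal.ofReal_mul (by positivity)]; ring
      _ ≤ ENNReal.ofReal ((2⁻¹) ^ k * (4 ^ N * r ^ (N - 1))) * V1 * maxFn μ 0 := by
          exact mul_le_mul_left (mul_le_mul_left (ENNReal.ofReal_le_ofReal key) _) _
      _ = ((2:ℝ≥0∞)⁻¹) ^ k * (ENNReal.ofReal (4 ^ N * r ^ (N - 1)) * V1 * maxFn μ 0) := by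
          rw [ENNReal.ofReal_mul (by positivity), ENNReal.ofReal_pow (by norm_num),
            ENNReal.ofReal_inv_of_pos (by norm_num), ENNReal.ofReal_ofNat]
          ring
  calc (∫⁻ y in {y : EuclideanSpace ℝ (Fin N) | y ≠ 0 ∧ ‖y‖ ≤ 2 * r}, (‖y‖₊ : ℝ≥0∞)⁻¹ ∂μ)
      ≤ ∫⁻ y in ⋃ k, A k, (‖y‖₊ : ℝ≥0∞)⁻¹ ∂μ := lintegral_mono_set hsub
    _ ≤ ∑' k, ∫⁻ y in A k, (‖y‖₊ : ℝ≥0∞)⁻¹ ∂μ := lintegral_iUnion_le _ _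
    _ ≤ ∑' k, ((2:ℝ≥0∞)⁻¹) ^ k * (ENNReal.ofReal (4 ^ N * r ^ (N - 1)) * V1 * maxFn μ 0) :=
        ENNReal.tsum_le_tsum hterm
    _ = (∑' k, ((2:ℝ≥0∞)⁻¹) ^ k) * (ENNReal.ofReal (4 ^ N * r ^ (N - 1)) * V1 * maxFn μ 0) :=
        ENNReal.tsum_mul_right
    _ = 2 * (ENNReal.ofReal (4 ^ N * r ^ (N - 1)) * V1 * maxFn μ 0) := by
        rw [ENNReal.tsum_geometric]; simp [ENNReal.one_sub_inv_two]
    _ = ENNReal.ofReal (4 ^ N * r ^ (N - 1)) * (2 * V1) * maxFn μ 0 := by ring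

-- ν supported in compact E with potential ≤ 1 is a finite measure
lemma nu_finite {N : ℕ} (hN : 2 ≤ N) {E : Set (EuclideanSpace ℝ (Fin N))}
    (hEc : IsCompact E) (ν : Measure (EuclideanSpace ℝ (Fin N))) (hν0 : ν Eᶜ = 0)
    (hpot : ∀ x : EuclideanSpace ℝ (Fin N),
      (∫⁻ y, (‖x - y‖₊ : ℝ≥0∞) ^ (-(N - 1 : ℝ)) ∂ν) ≤ 1) :
    IsFiniteMeasure ν := by
  have hE : ν E ≠ ∞ := by
    rcases Set.eq_empty_or_nonempty E with rfl | ⟨x₀, hx₀⟩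
    · simp
    · obtain ⟨R, hR⟩ := hEc.isBounded.subset_closedBall x₀
      set R' : ℝ := max R 1 with hR'
      have hR'1 : (1:ℝ) ≤ R' := le_max_right _ _
      have hR'0 : (0:ℝ) < R' := lt_of_lt_of_le one_pos hR'1
      set c : ℝ≥0∞ := (ENNReal.ofReal R' ^ ((N:ℝ) - 1))⁻¹ with hc
      have hfin : ENNReal.ofReal R' ^ ((N:ℝ) - 1) ≠ ∞ :=
        ENNReal.rpow_ne_top_of_nonneg (by simp; norm_cast; omega) ENNReal.ofReal_ne_top
      have hne0 : ENNReal.ofReal R' ^ ((N:ℝ) - 1) ≠ 0 := by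
        apply (ENNReal.rpow_pos (by simpa using hR'0) ENNReal.ofReal_ne_top).ne'
      have hcne0 : c ≠ 0 := by simpa [hc] using hfin
      have hcnetop : c ≠ ∞ := by simpa [hc] using hne0
      have hlow : ∀ y ∈ E, c ≤ (‖x₀ - y‖₊ : ℝ≥0∞) ^ (-(N - 1 : ℝ)) := by
        intro y hy
        have h1 : (‖x₀ - y‖₊ : ℝ≥0∞) ≤ ENNReal.ofReal R' := by
          rw [show (‖x₀ - y‖₊ : ℝ≥0∞) = ENNReal.ofReal ‖x₀ - y‖ from (ofReal_norm (x₀ - y)).symm]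
          apply ENNReal.ofReal_le_ofReal
          have := hR hy
          rw [mem_closedBall, dist_comm, dist_eq_norm] at this
          exact this.trans (le_max_left _ _)
        rw [show (-(N - 1 : ℝ)) = -((N:ℝ) - 1) by ring, ENNReal.rpow_neg, hc]
        have h2 : (2:ℝ) ≤ N := by exact_mod_cast hN
        exact ENNReal.inv_le_inv' (ENNReal.rpow_le_rpow h1 (by linarith))
      have key : c * ν E ≤ 1 := by
        calc c * ν E = ∫⁻ y in E, c ∂ν := (setLIntegral_const E c).symm
          _ ≤ ∫⁻ y in E, (‖x₀ - y‖₊ : ℝ≥0∞) ^ (-(N - 1 : ℝ)) ∂ν :=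
              setLIntegral_mono' hEc.measurableSet hlow
          _ ≤ ∫⁻ y, (‖x₀ - y‖₊ : ℝ≥0∞) ^ (-(N - 1 : ℝ)) ∂ν := setLIntegral_le_lintegral _ _
          _ ≤ 1 := hpot x₀
      intro h
      rw [h, ENNReal.mul_top hcne0] at key
      exact (by simp at key : False)
  refine ⟨?_⟩
  have : ν Set.univ ≤ ν E + ν Eᶜ := by
    rw [← Set.union_compl_self E]; exact measure_union_le _ _
  rw [hν0, add_zero] at this
  exact lt_of_le_of_lt this (lt_top_iff_ne_top.mpr hE)

lemma nu_bound {N : ℕ} (hN : 2 ≤ N) (μ : Measure (EuclideanSpace ℝ (Fin N)))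
    [IsFiniteMeasure μ] {r t : ℝ} (ht : 0 < t)
    {E : Set (EuclideanSpace ℝ (Fin N))} (hEc : IsCompact E)
    (hE : E ⊆ {x | x ∈ ball (0 : EuclideanSpace ℝ (Fin N)) r ∧
        ENNReal.ofReal t <
          ∫⁻ y in {y : EuclideanSpace ℝ (Fin N) | y ≠ 0 ∧ ‖y‖ ≤ 2 * r},
            (‖x - y‖₊ : ℝ≥0∞) ^ (-(N - 1 : ℝ)) * (‖y‖₊ : ℝ≥0∞)⁻¹ ∂μ})
    (ν : Measure (EuclideanSpace ℝ (Fin N))) (hν0 : ν Eᶜ = 0)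
    (hpot : ∀ x : EuclideanSpace ℝ (Fin N),
      (∫⁻ y, (‖x - y‖₊ : ℝ≥0∞) ^ (-(N - 1 : ℝ)) ∂ν) ≤ 1) :
    ENNReal.ofReal t * ν E ≤
      ∫⁻ y in {y : EuclideanSpace ℝ (Fin N) | y ≠ 0 ∧ ‖y‖ ≤ 2 * r}, (‖y‖₊ : ℝ≥0∞)⁻¹ ∂μ := by
  haveI : IsFiniteMeasure ν := nu_finite hN hEc ν hν0 hpot
  set S := {y : EuclideanSpace ℝ (Fin N) | y ≠ 0 ∧ ‖y‖ ≤ 2 * r} with hS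
  have m1 : Measurable fun p : EuclideanSpace ℝ (Fin N) × EuclideanSpace ℝ (Fin N) =>
      (‖p.1 - p.2‖₊ : ℝ≥0∞) ^ (-(N - 1 : ℝ)) :=
    (measurable_coe_nnreal_ennreal.comp
      (continuous_fst.sub continuous_snd).nnnorm.measurable).pow measurable_const
  have m2 : Measurable fun p : EuclideanSpace ℝ (Fin N) × EuclideanSpace ℝ (Fin N) =>
      (‖p.2‖₊ : ℝ≥0∞)⁻¹ :=
    (measurable_coe_nnreal_ennreal.comp continuous_snd.nnnorm.measurable).inv
  calc ENNReal.ofReal t * ν E = ∫⁻ x in E, ENNReal.ofReal t ∂ν := (setLIntegral_const E _).symm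
    _ ≤ ∫⁻ x in E, (∫⁻ y in S, (‖x - y‖₊ : ℝ≥0∞) ^ (-(N - 1 : ℝ)) * (‖y‖₊ : ℝ≥0∞)⁻¹ ∂μ) ∂ν :=
        setLIntegral_mono' hEc.measurableSet fun x hx => (hE hx).2.le
    _ ≤ ∫⁻ x, (∫⁻ y in S, (‖x - y‖₊ : ℝ≥0∞) ^ (-(N - 1 : ℝ)) * (‖y‖₊ : ℝ≥0∞)⁻¹ ∂μ) ∂ν :=
        setLIntegral_le_lintegral _ _
    _ = ∫⁻ y, (∫⁻ x, (‖x - y‖₊ : ℝ≥0∞) ^ (-(N - 1 : ℝ)) * (‖y‖₊ : ℝ≥0∞)⁻¹ ∂ν) ∂(μ.restrict S) :=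
        lintegral_lintegral_swap ((m1.mul m2).aemeasurable)
    _ = ∫⁻ y in S, (∫⁻ x, (‖x - y‖₊ : ℝ≥0∞) ^ (-(N - 1 : ℝ)) ∂ν) * (‖y‖₊ : ℝ≥0∞)⁻¹ ∂μ := by
        refine lintegral_congr fun y => ?_
        exact lintegral_mul_const _ (by
          exact (measurable_coe_nnreal_ennreal.comp
            ((continuous_id.sub continuous_const).nnnorm.measurable)).pow measurable_const)
    _ ≤ ∫⁻ y in S, (‖y‖₊ : ℝ≥0∞)⁻¹ ∂μ := by
        refine lintegral_mono fun y => ?_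
        have h1 : (∫⁻ x, (‖x - y‖₊ : ℝ≥0∞) ^ (-(N - 1 : ℝ)) ∂ν) ≤ 1 := by
          have := hpot y
          rw [show (fun x => (‖x - y‖₊ : ℝ≥0∞) ^ (-(N - 1 : ℝ)))
              = fun x => (‖y - x‖₊ : ℝ≥0∞) ^ (-(N - 1 : ℝ)) from
            funext fun x => by rw [← neg_sub, nnnorm_neg]]
          exact this
        calc (∫⁻ x, (‖x - y‖₊ : ℝ≥0∞) ^ (-(N - 1 : ℝ)) ∂ν) * (‖y‖₊ : ℝ≥0∞)⁻¹
            ≤ 1 * (‖y‖₊ : ℝ≥0∞)⁻¹ := mul_le_mul_left h1 _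
          _ = (‖y‖₊ : ℝ≥0∞)⁻¹ := one_mul _

/-- For `N ≥ 2` there is `C = C(N)` such that for every finite positive Radon measure `μ`
and every `r > 0`, the weak capacitary estimate
`sup_{t>0} t · Cap({x ∈ B(0,r) : ∫_{0<|y|≤2r} |x−y|^{-(N-1)} |y|^{-1} dμ(y) > t})
  ≤ C · r^{N-1} · M(μ)(0)` holds. -/
theorem weak_capacitary_estimate_for_term_B
    (N : ℕ) (hN : 2 ≤ N) :
    ∃ C : ℝ, 0 < C ∧ ∀ μ : Measure (EuclideanSpace ℝ (Fin N)), IsFiniteMeasure μ →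
      ∀ r : ℝ, 0 < r →
        (⨆ (t : ℝ) (_ : 0 < t), ENNReal.ofReal t *
            rieszCap N {x | x ∈ ball (0 : EuclideanSpace ℝ (Fin N)) r ∧
              ENNReal.ofReal t <
                ∫⁻ y in {y : EuclideanSpace ℝ (Fin N) | y ≠ 0 ∧ ‖y‖ ≤ 2 * r},
                  (‖x - y‖₊ : ℝ≥0∞) ^ (-(N - 1 : ℝ)) * (‖y‖₊ : ℝ≥0∞)⁻¹ ∂μ}) ≤
          ENNReal.ofReal C * ENNReal.ofReal (r ^ (N - 1)) * maxFn μ 0 := by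
  set V1 := volume (ball (0 : EuclideanSpace ℝ (Fin N)) 1) with hV1
  set K : ℝ≥0∞ := ENNReal.ofReal (4 ^ N) * (2 * V1) with hK
  have hKtop : K ≠ ⊤ :=
    ENNReal.mul_ne_top ENNReal.ofReal_ne_top
      (ENNReal.mul_ne_top (by simp) measure_ball_lt_top.ne)
  have hKpos : (0:ℝ) ≤ K.toReal := ENNReal.toReal_nonneg
  refine ⟨K.toReal + 1, by linarith, ?_⟩
  intro μ hμ r hr
  haveI := hμ
  refine iSup₂_le fun t ht => ?_
  rw [rieszCap]
  simp_rw [ENNReal.mul_iSup]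
  refine iSup_le fun E => iSup_le fun hEc => iSup_le fun hE => iSup_le fun ν =>
    iSup_le fun hν0 => iSup_le fun hpot => ?_
  calc ENNReal.ofReal t * ν E
      ≤ ∫⁻ y in {y : EuclideanSpace ℝ (Fin N) | y ≠ 0 ∧ ‖y‖ ≤ 2 * r},
          (‖y‖₊ : ℝ≥0∞)⁻¹ ∂μ := nu_bound hN μ ht hEc hE ν hν0 hpot
    _ ≤ ENNReal.ofReal (4 ^ N * r ^ (N - 1)) * (2 * V1) * maxFn μ 0 := dyadic_bound hN μ hr
    _ ≤ ENNReal.ofReal (K.toReal + 1) * ENNReal.ofReal (r ^ (N - 1)) * maxFn μ 0 := by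
        refine mul_le_mul_left ?_ _
        rw [ENNReal.ofReal_mul (by positivity)]
        calc ENNReal.ofReal (4 ^ N) * ENNReal.ofReal (r ^ (N - 1)) * (2 * V1)
            = K * ENNReal.ofReal (r ^ (N - 1)) := by rw [hK]; ring
          _ ≤ ENNReal.ofReal (K.toReal + 1) * ENNReal.ofReal (r ^ (N - 1)) := by
              refine mul_le_mul_left ?_ _
              conv_lhs => rw [← ENNReal.ofReal_toReal hKtop]
              exact ENNReal.ofReal_le_ofReal (by linarith)
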